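/- Let P ∈ K[t] be a nonzero polynomial. Since K is algebraically closed, write P(t) = a·t^k·∏_{i=1}^{n−k}(1 − λ_i·t), where a ∈ K is nonzero, k is the multiplicity of 0 as a root of P, and λ_1, …, λ_{n−k} ∈ K∖{0} are the reciprocals of the nonzero roots of P listed with multiplicity. Set l_q(P) = Σ_{i with v_q(λ_i) ≤ 1} (1 − v_q(λ_i)). Then: (i) for every root of unity ε ∈ K with P(ε·q⁻¹) ≠ 0 one has v_q(P(ε·q⁻¹)) ≥ v_q(a) − k − l_q(P); and (ii) for all but finitely many roots of unity ε ∈ K of order coprime to p one has P(ε·q⁻¹) ≠ 0 and v_q(P(ε·q⁻¹)) = v_q(a) − k − l_q(P). In particular, the minimum of v_q(P(ε·q⁻¹)) over all roots of unity ε ∈ K equals v_q(a) − k − l_q(P). -/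

import Mathlib

open Finset Polynomial

/-- The additive valuation on the algebraic closure of `ℚ_[p]` attached to an absolute
value `v`, normalised so that `q = p ^ d` has valuation `1`. -/
noncomputable def vq (p d : ℕ) [Fact p.Prime] (v : AlgebraicClosure ℚ_[p] → ℝ)
    (x : AlgebraicClosure ℚ_[p]) : ℝ :=
  -Real.log (v x) / Real.log ((p : ℝ) ^ d)

/-- `ε` is a root of unity. -/
def IsRootOfUnity {K : Type*} [Monoid K] (ε : K) : Prop :=
  ∃ m : ℕ, 0 < m ∧ ε ^ m = 1

/-- `ε` is a root of unity of order coprime to `p`. -/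
def IsPrimeToRootOfUnity (p : ℕ) {K : Type*} [Monoid K] (ε : K) : Prop :=
  ∃ m : ℕ, 0 < m ∧ ¬ p ∣ m ∧ ε ^ m = 1

namespace PadicRootsAux

variable {p : ℕ} [hp : Fact p.Prime] {d : ℕ}

local notation "K" => AlgebraicClosure ℚ_[p]

variable {v : AlgebraicClosure ℚ_[p] → ℝ}

lemma v_one (hext : ∀ x : ℚ_[p], v (algebraMap ℚ_[p] K x) = ‖x‖) : v 1 = 1 := by
  simpa using hext 1

lemma v_zero (hext : ∀ x : ℚ_[p], v (algebraMap ℚ_[p] K x) = ‖x‖) : v 0 = 0 := by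
  simpa using hext 0

lemma v_nonneg (hmul : ∀ x y : K, v (x * y) = v x * v y) (x : K) : 0 ≤ v x := by
  obtain ⟨z, hz⟩ := IsAlgClosed.exists_pow_nat_eq x (n := 2) (by norm_num)
  rw [← hz, pow_two, hmul]
  exact mul_self_nonneg _

lemma v_pos (hmul : ∀ x y : K, v (x * y) = v x * v y)
    (hext : ∀ x : ℚ_[p], v (algebraMap ℚ_[p] K x) = ‖x‖) {x : K} (hx : x ≠ 0) : 0 < v x := by
  have h1 : v x * v x⁻¹ = 1 := by rw [← hmul, mul_inv_cancel₀ hx, v_one hext]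
  rcases (v_nonneg hmul x).lt_or_eq with h | h
  · exact h
  · exfalso; rw [← h, zero_mul] at h1; norm_num at h1

lemma v_neg (hmul : ∀ x y : K, v (x * y) = v x * v y)
    (hext : ∀ x : ℚ_[p], v (algebraMap ℚ_[p] K x) = ‖x‖) (x : K) : v (-x) = v x := by
  have h2 : v (-1 : K) * v (-1 : K) = 1 := by
    rw [← hmul]; norm_num; exact v_one hext
  have hm1 : v (-1 : K) = 1 := by
    rcases mul_self_eq_one_iff.mp h2 with h | h
    · exact h
    · nlinarith [v_nonneg hmul (-1 : K)]
  calc v (-x) = v ((-1) * x) := by rw [neg_one_mul]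
  _ = v x := by rw [hmul, hm1, one_mul]

lemma v_add_eq_right (hmul : ∀ x y : K, v (x * y) = v x * v y)
    (hna : ∀ x y : K, v (x + y) ≤ max (v x) (v y))
    (hext : ∀ x : ℚ_[p], v (algebraMap ℚ_[p] K x) = ‖x‖)
    {x y : K} (h : v x < v y) : v (x + y) = v y := by
  have h1 : v (x + y) ≤ v y := (hna x y).trans_eq (max_eq_right h.le)
  have h2 : v y ≤ max (v (x + y)) (v x) := by
    have h3 := hna (x + y) (-x)
    rw [v_neg hmul hext] at h3
    have e : x + y + -x = y := by ring
    rwa [e] at h3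
  rcases le_max_iff.mp h2 with h' | h'
  · exact le_antisymm h1 h'
  · exact absurd h' h.not_ge

lemma v_add_eq (hmul : ∀ x y : K, v (x * y) = v x * v y)
    (hna : ∀ x y : K, v (x + y) ≤ max (v x) (v y))
    (hext : ∀ x : ℚ_[p], v (algebraMap ℚ_[p] K x) = ‖x‖)
    {x y : K} (h : v x ≠ v y) : v (x + y) = max (v x) (v y) := by
  rcases h.lt_or_gt with h' | h'
  · rw [v_add_eq_right hmul hna hext h', max_eq_right h'.le]
  · rw [add_comm, v_add_eq_right hmul hna hext h', max_eq_left h'.le]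

lemma v_sum (hna : ∀ x y : K, v (x + y) ≤ max (v x) (v y))
    (hext : ∀ x : ℚ_[p], v (algebraMap ℚ_[p] K x) = ‖x‖)
    {ι : Type*} {s : Finset ι} {f : ι → K} {c : ℝ} (hc : 0 ≤ c)
    (h : ∀ i ∈ s, v (f i) ≤ c) : v (∑ i ∈ s, f i) ≤ c := by
  classical
  induction s using Finset.cons_induction with
  | empty => simpa [v_zero hext] using hc
  | cons a s ha ih =>
    rw [Finset.sum_cons]
    exact (hna _ _).trans (max_le (h a (Finset.mem_cons_self a s))
      (ih fun i hi => h i (Finset.mem_cons.mpr (Or.inr hi))))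

lemma v_pow (hmul : ∀ x y : K, v (x * y) = v x * v y)
    (hext : ∀ x : ℚ_[p], v (algebraMap ℚ_[p] K x) = ‖x‖)
    (x : K) (n : ℕ) : v (x ^ n) = v x ^ n := by
  induction n with
  | zero => simpa using v_one hext
  | succ n ih => rw [pow_succ, pow_succ, hmul, ih]

lemma v_rootOfUnity (hmul : ∀ x y : K, v (x * y) = v x * v y)
    (hext : ∀ x : ℚ_[p], v (algebraMap ℚ_[p] K x) = ‖x‖)
    {ε : K} (h : IsRootOfUnity ε) : v ε = 1 := by
  obtain ⟨m, hm, he⟩ := h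
  have hpow : v ε ^ m = 1 := by rw [← v_pow hmul hext, he, v_one hext]
  have hnn := v_nonneg hmul ε
  rcases lt_trichotomy (v ε) 1 with h1 | h1 | h1
  · exfalso
    have := pow_lt_one₀ hnn h1 hm.ne'
    rw [hpow] at this; exact lt_irrefl _ this
  · exact h1
  · exfalso
    have := one_lt_pow₀ h1 hm.ne'
    rw [hpow] at this; exact lt_irrefl _ this

lemma v_natCast_le_one (hext : ∀ x : ℚ_[p], v (algebraMap ℚ_[p] K x) = ‖x‖)
    (n : ℕ) : v ((n : K)) ≤ 1 := by
  have e : ((n : K)) = algebraMap ℚ_[p] K ((n : ℚ_[p])) := by rw [map_natCast]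
  rw [e, hext]
  have := Padic.norm_int_le_one (p := p) (n : ℤ)
  simpa using this

lemma v_natCast_eq_one (hext : ∀ x : ℚ_[p], v (algebraMap ℚ_[p] K x) = ‖x‖)
    {n : ℕ} (hn : ¬ p ∣ n) : v ((n : K)) = 1 := by
  have e : ((n : K)) = algebraMap ℚ_[p] K ((n : ℚ_[p])) := by rw [map_natCast]
  rw [e, hext]
  have h1 : ‖((n : ℤ) : ℚ_[p])‖ ≤ 1 := Padic.norm_int_le_one _
  have h2 : ¬ ‖((n : ℤ) : ℚ_[p])‖ < 1 := by
    rw [Padic.norm_intCast_lt_one_iff]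
    exact_mod_cast hn
  have : ‖((n : ℤ) : ℚ_[p])‖ = 1 := le_antisymm h1 (not_lt.mp h2)
  simpa using this

lemma v_inv (hmul : ∀ x y : K, v (x * y) = v x * v y)
    (hext : ∀ x : ℚ_[p], v (algebraMap ℚ_[p] K x) = ‖x‖)
    {x : K} (hx : x ≠ 0) : v x⁻¹ = (v x)⁻¹ := by
  have h1 : v x * v x⁻¹ = 1 := by rw [← hmul, mul_inv_cancel₀ hx, v_one hext]
  exact eq_inv_of_mul_eq_one_right h1

lemma v_pi (hmul : ∀ x y : K, v (x * y) = v x * v y)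
    (hext : ∀ x : ℚ_[p], v (algebraMap ℚ_[p] K x) = ‖x‖) :
    v (((p : K) ^ d)⁻¹) = (p : ℝ) ^ d := by
  have hp2 := hp.out.two_le
  have hpK : ((p : K)) = algebraMap ℚ_[p] K ((p : ℚ_[p])) := by rw [map_natCast]
  have hvp : v ((p : K)) = ((p : ℝ))⁻¹ := by rw [hpK, hext, Padic.norm_p]
  have hppos : (0:ℝ) < (p:ℝ) := by positivity
  have hpne : ((p : K)) ≠ 0 := by
    exact_mod_cast Nat.cast_ne_zero.mpr hp.out.ne_zero
  rw [v_inv hmul hext (pow_ne_zero _ hpne), v_pow hmul hext, hvp, inv_pow, inv_inv]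

lemma logq_pos (hd : 0 < d) : 0 < Real.log ((p : ℝ) ^ d) := by
  apply Real.log_pos
  have : (1:ℝ) < (p:ℝ) := by exact_mod_cast hp.out.one_lt
  exact one_lt_pow₀ this hd.ne'

lemma vq_congr {x y : K} (h : v x = v y) : vq p d v x = vq p d v y := by
  unfold vq; rw [h]

lemma vq_one (hext : ∀ x : ℚ_[p], v (algebraMap ℚ_[p] K x) = ‖x‖) : vq p d v 1 = 0 := by
  unfold vq; rw [v_one hext, Real.log_one]; simp

lemma vq_mul (hmul : ∀ x y : K, v (x * y) = v x * v y)
    (hext : ∀ x : ℚ_[p], v (algebraMap ℚ_[p] K x) = ‖x‖)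
    {x y : K} (hx : x ≠ 0) (hy : y ≠ 0) :
    vq p d v (x * y) = vq p d v x + vq p d v y := by
  unfold vq
  rw [hmul, Real.log_mul (v_pos hmul hext hx).ne' (v_pos hmul hext hy).ne']
  ring

lemma vq_pow (hmul : ∀ x y : K, v (x * y) = v x * v y)
    (hext : ∀ x : ℚ_[p], v (algebraMap ℚ_[p] K x) = ‖x‖)
    (x : K) (n : ℕ) : vq p d v (x ^ n) = n * vq p d v x := by
  unfold vq
  rw [v_pow hmul hext, Real.log_pow]
  ring

lemma vq_prod (hmul : ∀ x y : K, v (x * y) = v x * v y)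
    (hext : ∀ x : ℚ_[p], v (algebraMap ℚ_[p] K x) = ‖x‖)
    {ι : Type*} {s : Finset ι} {f : ι → K} (h : ∀ i ∈ s, f i ≠ 0) :
    vq p d v (∏ i ∈ s, f i) = ∑ i ∈ s, vq p d v (f i) := by
  classical
  induction s using Finset.cons_induction with
  | empty => simpa using vq_one hext
  | cons a s ha ih =>
    rw [Finset.prod_cons, Finset.sum_cons,
      vq_mul hmul hext (h a (Finset.mem_cons_self a s))
        (Finset.prod_ne_zero_iff.mpr fun i hi => h i (Finset.mem_cons.mpr (Or.inr hi))),
      ih fun i hi => h i (Finset.mem_cons.mpr (Or.inr hi))]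

lemma vq_le_vq_iff (hmul : ∀ x y : K, v (x * y) = v x * v y)
    (hext : ∀ x : ℚ_[p], v (algebraMap ℚ_[p] K x) = ‖x‖) (hd : 0 < d)
    {x y : K} (hx : x ≠ 0) (hy : y ≠ 0) :
    vq p d v x ≤ vq p d v y ↔ v y ≤ v x := by
  unfold vq
  rw [div_le_div_iff_of_pos_right (logq_pos hd), neg_le_neg_iff,
    Real.log_le_log_iff (v_pos hmul hext hy) (v_pos hmul hext hx)]

lemma vq_eps_pi (hmul : ∀ x y : K, v (x * y) = v x * v y)
    (hext : ∀ x : ℚ_[p], v (algebraMap ℚ_[p] K x) = ‖x‖) (hd : 0 < d)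
    {ε : K} (hε : IsRootOfUnity ε) :
    vq p d v (ε * ((p : K) ^ d)⁻¹) = -1 := by
  unfold vq
  rw [hmul, v_rootOfUnity hmul hext hε, v_pi hmul hext, one_mul, neg_div,
    div_self (logq_pos hd).ne']

lemma eps_pi_ne_zero {ε : K} (hε : IsRootOfUnity ε) : ε * ((p : K) ^ d)⁻¹ ≠ 0 := by
  obtain ⟨m, hm, he⟩ := hε
  have hε0 : ε ≠ 0 := by
    intro h0; rw [h0, zero_pow hm.ne'] at he; exact zero_ne_one he
  have hpne : ((p : K)) ≠ 0 := Nat.cast_ne_zero.mpr hp.out.ne_zero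
  exact mul_ne_zero hε0 (inv_ne_zero (pow_ne_zero _ hpne))

/-- The key per-factor estimate. -/
lemma factor_key (hmul : ∀ x y : K, v (x * y) = v x * v y)
    (hna : ∀ x y : K, v (x + y) ≤ max (v x) (v y))
    (hext : ∀ x : ℚ_[p], v (algebraMap ℚ_[p] K x) = ‖x‖) (hd : 0 < d)
    {ε l : K} (hε : IsRootOfUnity ε) (hl : l ≠ 0)
    (hne : 1 - l * (ε * ((p : K) ^ d)⁻¹) ≠ 0) :
    -(if vq p d v l ≤ 1 then 1 - vq p d v l else 0) ≤
        vq p d v (1 - l * (ε * ((p : K) ^ d)⁻¹)) ∧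
      (1 ≤ v (1 - l * (ε * ((p : K) ^ d)⁻¹)) →
        vq p d v (1 - l * (ε * ((p : K) ^ d)⁻¹)) =
          -(if vq p d v l ≤ 1 then 1 - vq p d v l else 0)) := by
  set u : K := l * (ε * ((p : K) ^ d)⁻¹) with hu_def
  have hx0 : ε * ((p : K) ^ d)⁻¹ ≠ 0 := eps_pi_ne_zero hε
  have hu0 : u ≠ 0 := mul_ne_zero hl hx0
  have hvqu : vq p d v u = vq p d v l - 1 := by
    rw [hu_def, vq_mul hmul hext hl hx0, vq_eps_pi hmul hext hd hε]; ring
  have hcond : (vq p d v l ≤ 1) ↔ 1 ≤ v u := by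
    have h1 : vq p d v u ≤ vq p d v 1 ↔ v 1 ≤ v u :=
      vq_le_vq_iff hmul hext hd hu0 one_ne_zero
    rw [vq_one hext, v_one hext] at h1
    constructor
    · intro h; exact h1.mp (by rw [hvqu]; linarith)
    · intro h; have := h1.mpr h; rw [hvqu] at this; linarith
  have hsub : (1 : K) - u = 1 + -u := by ring
  rcases lt_trichotomy (v u) 1 with hA | hB | hC
  · -- v u < 1 : factor has valuation 0, condition false
    have hcondF : ¬ (vq p d v l ≤ 1) := by rw [hcond]; exact not_le.mpr hA
    have hv1u : v (1 - u) = 1 := by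
      rw [hsub, v_add_eq hmul hna hext (by rw [v_one hext, v_neg hmul hext]; exact hA.ne'),
        v_one hext, v_neg hmul hext, max_eq_left hA.le]
    have heq : vq p d v (1 - u) = 0 := by
      unfold vq; rw [hv1u, Real.log_one]; simp
    rw [if_neg hcondF, heq]
    exact ⟨by norm_num, fun _ => by norm_num⟩
  · -- v u = 1
    have hcondT : vq p d v l ≤ 1 := hcond.mpr hB.ge
    have hvqu0 : vq p d v u = 0 := by unfold vq; rw [hB, Real.log_one]; simp
    have hvql : vq p d v l = 1 := by rw [hvqu0] at hvqu; linarith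
    have hle : v (1 - u) ≤ 1 := by
      have h3 := hna 1 (-u)
      rw [v_one hext, v_neg hmul hext, hB, max_self] at h3
      rwa [hsub]
    have hge0 : 0 ≤ vq p d v (1 - u) := by
      have := (vq_le_vq_iff hmul hext hd one_ne_zero hne).mpr
        (by rw [v_one hext]; exact hle)
      rwa [vq_one hext] at this
    rw [if_pos hcondT, hvql]
    refine ⟨by simpa using hge0, fun hge => ?_⟩
    have hv1 : v (1 - u) = 1 := le_antisymm hle hge
    unfold vq; rw [hv1, Real.log_one]; simp
  · -- 1 < v u
    have hcondT : vq p d v l ≤ 1 := hcond.mpr hC.le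
    have hv1u : v (1 - u) = v u := by
      rw [hsub, v_add_eq hmul hna hext
          (by rw [v_one hext, v_neg hmul hext]; exact hC.ne),
        v_one hext, v_neg hmul hext, max_eq_right hC.le]
    have heq : vq p d v (1 - u) = vq p d v l - 1 := by
      rw [vq_congr hv1u, hvqu]
    rw [if_pos hcondT, heq]
    exact ⟨by linarith, fun _ => by ring⟩

/-- Distinct roots of unity of order prime to `p` are at distance `1`. -/
lemma v_sub_roots (hmul : ∀ x y : K, v (x * y) = v x * v y)
    (hna : ∀ x y : K, v (x + y) ≤ max (v x) (v y))
    (hext : ∀ x : ℚ_[p], v (algebraMap ℚ_[p] K x) = ‖x‖)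
    {ε ε' : K} (h : IsPrimeToRootOfUnity p ε) (h' : IsPrimeToRootOfUnity p ε')
    (hne : ε ≠ ε') : v (ε - ε') = 1 := by
  obtain ⟨m1, hm1, hpm1, he1⟩ := h
  obtain ⟨m2, hm2, hpm2, he2⟩ := h'
  set m : ℕ := m1 * m2 with hm_def
  have hm : 0 < m := Nat.mul_pos hm1 hm2
  have hpm : ¬ p ∣ m := fun hdvd => ((Nat.Prime.dvd_mul hp.out).mp hdvd).elim hpm1 hpm2
  have hε'0 : ε' ≠ 0 := by
    intro h0; rw [h0, zero_pow hm2.ne'] at he2; exact zero_ne_one he2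
  set ζ : K := ε * ε'⁻¹ with hζ_def
  have hζm : ζ ^ m = 1 := by
    rw [hζ_def, mul_pow, inv_pow, hm_def, pow_mul, he1, one_pow,
      mul_comm m1 m2, pow_mul, he2, one_pow, inv_one, mul_one]
  have hζ1 : ζ ≠ 1 := by
    intro hh
    exact hne ((mul_inv_eq_one₀ hε'0).mp hh)
  have hgeom : ∑ j ∈ range m, ζ ^ j = 0 := by
    rw [geom_sum_eq hζ1, hζm]; simp
  have hkey : (∑ j ∈ range m, ∑ i ∈ range j, ζ ^ i) * (ζ - 1) = -(m : K) := by
    rw [Finset.sum_mul]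
    simp_rw [geom_sum_mul]
    rw [Finset.sum_sub_distrib, hgeom]
    simp
  have hvζ : v ζ = 1 := v_rootOfUnity hmul hext ⟨m, hm, hζm⟩
  have hS : v (∑ j ∈ range m, ∑ i ∈ range j, ζ ^ i) ≤ 1 :=
    v_sum hna hext zero_le_one fun j _ =>
      v_sum hna hext zero_le_one fun i _ => by
        rw [v_pow hmul hext, hvζ, one_pow]
  have hvm : v ((m : K)) = 1 := v_natCast_eq_one hext hpm
  have h1 : v (∑ j ∈ range m, ∑ i ∈ range j, ζ ^ i) * v (ζ - 1) = 1 := by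
    rw [← hmul, hkey, v_neg hmul hext, hvm]
  have hub : v (ζ - 1) ≤ 1 := by
    have h3 := hna ζ (-1)
    rw [v_neg hmul hext, v_one hext, hvζ, max_self] at h3
    rwa [sub_eq_add_neg]
  have hlb : 1 ≤ v (ζ - 1) := by
    nlinarith [v_nonneg hmul (ζ - 1), v_nonneg hmul (∑ j ∈ range m, ∑ i ∈ range j, ζ ^ i)]
  have hv : v (ζ - 1) = 1 := le_antisymm hub hlb
  have hεε' : ε - ε' = ε' * (ζ - 1) := by
    rw [hζ_def]; field_simp
  rw [hεε', hmul, hv, mul_one, v_rootOfUnity hmul hext ⟨m2, hm2, he2⟩]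

/-- There are infinitely many roots of unity of order prime to `p`. -/
lemma primeToRoots_infinite :
    {ε : K | IsPrimeToRootOfUnity p ε}.Infinite := by
  have hζ : ∀ j : ℕ, ∃ ζ : K, IsPrimitiveRoot ζ (p * j + 1) := by
    intro j
    haveI : NeZero (((p * j + 1 : ℕ) : K)) :=
      ⟨Nat.cast_ne_zero.mpr (Nat.succ_ne_zero _)⟩
    exact HasEnoughRootsOfUnity.exists_primitiveRoot K _
  choose f hf using hζ
  apply Set.infinite_of_injective_forall_mem (f := f)
  case hi =>
    intro j j' h
    have h1 := hf j
    rw [h] at h1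
    have e1 := h1.eq_orderOf
    have e2 := (hf j').eq_orderOf
    have : p * j + 1 = p * j' + 1 := by rw [e1, e2]
    exact Nat.eq_of_mul_eq_mul_left hp.out.pos (by omega)
  case hf =>
    intro j
    refine ⟨p * j + 1, Nat.succ_pos _, ?_, (hf j).pow_eq_one⟩
    intro hdvd
    have : p ∣ 1 := (Nat.dvd_add_right (dvd_mul_right p j)).mp hdvd
    have := Nat.le_of_dvd one_pos this
    have := hp.out.two_le
    omega

end PadicRootsAux
theorem padic_valuation_of_polynomial_at_roots_of_unity
    (p : ℕ) [Fact p.Prime] (d : ℕ) (hd : 0 < d)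
    (v : AlgebraicClosure ℚ_[p] → ℝ)
    (hmul : ∀ x y, v (x * y) = v x * v y)
    (hna : ∀ x y, v (x + y) ≤ max (v x) (v y))
    (hext : ∀ x : ℚ_[p], v (algebraMap ℚ_[p] (AlgebraicClosure ℚ_[p]) x) = ‖x‖)
    (P : Polynomial (AlgebraicClosure ℚ_[p])) (hP : P ≠ 0)
    (a : AlgebraicClosure ℚ_[p]) (ha : a ≠ 0)
    (k N : ℕ) (lam : Fin N → AlgebraicClosure ℚ_[p]) (hlam : ∀ i, lam i ≠ 0)
    (hfact : P = Polynomial.C a * Polynomial.X ^ k *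
        ∏ i, (1 - Polynomial.C (lam i) * Polynomial.X)) :
    (∀ ε : AlgebraicClosure ℚ_[p], IsRootOfUnity ε →
        P.eval (ε * ((p : AlgebraicClosure ℚ_[p]) ^ d)⁻¹) ≠ 0 →
        vq p d v a - k -
            (∑ i, if vq p d v (lam i) ≤ 1 then 1 - vq p d v (lam i) else 0) ≤
          vq p d v (P.eval (ε * ((p : AlgebraicClosure ℚ_[p]) ^ d)⁻¹))) ∧
    {ε : AlgebraicClosure ℚ_[p] | IsPrimeToRootOfUnity p ε ∧
        ¬ (P.eval (ε * ((p : AlgebraicClosure ℚ_[p]) ^ d)⁻¹) ≠ 0 ∧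
          vq p d v (P.eval (ε * ((p : AlgebraicClosure ℚ_[p]) ^ d)⁻¹)) =
            vq p d v a - k -
              (∑ i, if vq p d v (lam i) ≤ 1 then 1 - vq p d v (lam i) else 0))}.Finite ∧
    IsLeast {r : ℝ | ∃ ε : AlgebraicClosure ℚ_[p], IsRootOfUnity ε ∧
        P.eval (ε * ((p : AlgebraicClosure ℚ_[p]) ^ d)⁻¹) ≠ 0 ∧
        r = vq p d v (P.eval (ε * ((p : AlgebraicClosure ℚ_[p]) ^ d)⁻¹))}
      (vq p d v a - k -
        (∑ i, if vq p d v (lam i) ≤ 1 then 1 - vq p d v (lam i) else 0)) := by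
  classical
  have hPR : ∀ {x : AlgebraicClosure ℚ_[p]}, IsPrimeToRootOfUnity p x → IsRootOfUnity x :=
    fun ⟨m, hm, _, he⟩ => ⟨m, hm, he⟩
  have heval : ∀ x : AlgebraicClosure ℚ_[p],
      P.eval x = a * x ^ k * ∏ i, (1 - lam i * x) := by
    intro x
    rw [hfact]
    simp [Polynomial.eval_prod]
  set T : ℝ := ∑ i, (if vq p d v (lam i) ≤ 1 then 1 - vq p d v (lam i) else 0) with hT
  have main1 : ∀ ε : AlgebraicClosure ℚ_[p], IsRootOfUnity ε →
      P.eval (ε * ((p : AlgebraicClosure ℚ_[p]) ^ d)⁻¹) ≠ 0 →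
      vq p d v a - k - T ≤
        vq p d v (P.eval (ε * ((p : AlgebraicClosure ℚ_[p]) ^ d)⁻¹)) := by
    intro ε hε hne
    have hx0 : ε * ((p : AlgebraicClosure ℚ_[p]) ^ d)⁻¹ ≠ 0 :=
      PadicRootsAux.eps_pi_ne_zero hε
    rw [heval] at hne ⊢
    have hprod : (∏ i, (1 - lam i * (ε * ((p : AlgebraicClosure ℚ_[p]) ^ d)⁻¹))) ≠ 0 :=
      right_ne_zero_of_mul hne
    have hfac : ∀ i, 1 - lam i * (ε * ((p : AlgebraicClosure ℚ_[p]) ^ d)⁻¹) ≠ 0 := fun i =>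
      Finset.prod_ne_zero_iff.mp hprod i (Finset.mem_univ i)
    rw [PadicRootsAux.vq_mul hmul hext (mul_ne_zero ha (pow_ne_zero _ hx0)) hprod,
      PadicRootsAux.vq_mul hmul hext ha (pow_ne_zero _ hx0),
      PadicRootsAux.vq_pow hmul hext, PadicRootsAux.vq_eps_pi hmul hext hd hε,
      PadicRootsAux.vq_prod hmul hext (fun i _ => hfac i)]
    have hsum : ∑ i, -(if vq p d v (lam i) ≤ 1 then 1 - vq p d v (lam i) else 0) ≤
        ∑ i, vq p d v (1 - lam i * (ε * ((p : AlgebraicClosure ℚ_[p]) ^ d)⁻¹)) :=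
      Finset.sum_le_sum fun i _ =>
        (PadicRootsAux.factor_key hmul hna hext hd hε (hlam i) (hfac i)).1
    rw [Finset.sum_neg_distrib] at hsum
    linarith [hsum, hT]
  have hgood : ∀ ε : AlgebraicClosure ℚ_[p], IsRootOfUnity ε →
      (∀ i, 1 ≤ v (1 - lam i * (ε * ((p : AlgebraicClosure ℚ_[p]) ^ d)⁻¹))) →
      P.eval (ε * ((p : AlgebraicClosure ℚ_[p]) ^ d)⁻¹) ≠ 0 ∧
        vq p d v (P.eval (ε * ((p : AlgebraicClosure ℚ_[p]) ^ d)⁻¹)) =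
          vq p d v a - k - T := by
    intro ε hε hge
    have hx0 : ε * ((p : AlgebraicClosure ℚ_[p]) ^ d)⁻¹ ≠ 0 :=
      PadicRootsAux.eps_pi_ne_zero hε
    have hfac : ∀ i, 1 - lam i * (ε * ((p : AlgebraicClosure ℚ_[p]) ^ d)⁻¹) ≠ 0 := by
      intro i h0
      have h1 := hge i
      rw [h0, PadicRootsAux.v_zero hext] at h1
      linarith
    have hprod : (∏ i, (1 - lam i * (ε * ((p : AlgebraicClosure ℚ_[p]) ^ d)⁻¹))) ≠ 0 :=
      Finset.prod_ne_zero_iff.mpr fun i _ => hfac i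
    have hne : P.eval (ε * ((p : AlgebraicClosure ℚ_[p]) ^ d)⁻¹) ≠ 0 := by
      rw [heval]
      exact mul_ne_zero (mul_ne_zero ha (pow_ne_zero _ hx0)) hprod
    refine ⟨hne, ?_⟩
    rw [heval,
      PadicRootsAux.vq_mul hmul hext (mul_ne_zero ha (pow_ne_zero _ hx0)) hprod,
      PadicRootsAux.vq_mul hmul hext ha (pow_ne_zero _ hx0),
      PadicRootsAux.vq_pow hmul hext, PadicRootsAux.vq_eps_pi hmul hext hd hε,
      PadicRootsAux.vq_prod hmul hext (fun i _ => hfac i)]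
    have hterm : ∀ i ∈ (Finset.univ : Finset (Fin N)),
        vq p d v (1 - lam i * (ε * ((p : AlgebraicClosure ℚ_[p]) ^ d)⁻¹)) =
          -(if vq p d v (lam i) ≤ 1 then 1 - vq p d v (lam i) else 0) := fun i _ =>
      (PadicRootsAux.factor_key hmul hna hext hd hε (hlam i) (hfac i)).2 (hge i)
    rw [Finset.sum_congr rfl hterm, Finset.sum_neg_distrib, ← hT]
    ring
  set E : Fin N → Set (AlgebraicClosure ℚ_[p]) := fun i =>
    {ε | IsPrimeToRootOfUnity p ε ∧
      v (1 - lam i * (ε * ((p : AlgebraicClosure ℚ_[p]) ^ d)⁻¹)) < 1} with hE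
  have hEsub : ∀ i, (E i).Subsingleton := by
    intro i ε hεmem ε' hε'mem
    by_contra hne'
    obtain ⟨hεp, hεlt⟩ := hεmem
    obtain ⟨hε'p, hε'lt⟩ := hε'mem
    have hu1 : v (lam i * (ε * ((p : AlgebraicClosure ℚ_[p]) ^ d)⁻¹)) = 1 := by
      have e : lam i * (ε * ((p : AlgebraicClosure ℚ_[p]) ^ d)⁻¹) =
          1 + -(1 - lam i * (ε * ((p : AlgebraicClosure ℚ_[p]) ^ d)⁻¹)) := by ring
      rw [e, PadicRootsAux.v_add_eq hmul hna hext
          (by rw [PadicRootsAux.v_one hext, PadicRootsAux.v_neg hmul hext]; exact hεlt.ne'),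
        PadicRootsAux.v_one hext, PadicRootsAux.v_neg hmul hext, max_eq_left hεlt.le]
    have hlp : v (lam i * ((p : AlgebraicClosure ℚ_[p]) ^ d)⁻¹) = 1 := by
      have e2 : lam i * (ε * ((p : AlgebraicClosure ℚ_[p]) ^ d)⁻¹) =
          (lam i * ((p : AlgebraicClosure ℚ_[p]) ^ d)⁻¹) * ε := by ring
      rw [e2, hmul, PadicRootsAux.v_rootOfUnity hmul hext (hPR hεp), mul_one] at hu1
      exact hu1
    have hdiff : v (ε - ε') = 1 :=
      PadicRootsAux.v_sub_roots hmul hna hext hεp hε'p hne'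
    have e3 : (lam i * ((p : AlgebraicClosure ℚ_[p]) ^ d)⁻¹) * (ε - ε') =
        (1 - lam i * (ε' * ((p : AlgebraicClosure ℚ_[p]) ^ d)⁻¹)) +
          -(1 - lam i * (ε * ((p : AlgebraicClosure ℚ_[p]) ^ d)⁻¹)) := by ring
    have h4 : v ((lam i * ((p : AlgebraicClosure ℚ_[p]) ^ d)⁻¹) * (ε - ε')) = 1 := by
      rw [hmul, hlp, hdiff, mul_one]
    have h5 := hna (1 - lam i * (ε' * ((p : AlgebraicClosure ℚ_[p]) ^ d)⁻¹))
      (-(1 - lam i * (ε * ((p : AlgebraicClosure ℚ_[p]) ^ d)⁻¹)))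
    rw [← e3, h4, PadicRootsAux.v_neg hmul hext] at h5
    rcases le_max_iff.mp h5 with h | h <;> linarith
  have hsub : {ε : AlgebraicClosure ℚ_[p] | IsPrimeToRootOfUnity p ε ∧
      ¬ (P.eval (ε * ((p : AlgebraicClosure ℚ_[p]) ^ d)⁻¹) ≠ 0 ∧
        vq p d v (P.eval (ε * ((p : AlgebraicClosure ℚ_[p]) ^ d)⁻¹)) =
          vq p d v a - k - T)} ⊆ ⋃ i, E i := by
    intro ε hmem
    obtain ⟨hεp, hbad⟩ := hmem
    by_contra hnot
    apply hbad
    have hge : ∀ i, 1 ≤ v (1 - lam i * (ε * ((p : AlgebraicClosure ℚ_[p]) ^ d)⁻¹)) := by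
      intro i
      by_contra hlt
      exact hnot (Set.mem_iUnion.mpr ⟨i, ⟨hεp, not_le.mp hlt⟩⟩)
    exact hgood ε (hPR hεp) hge
  have hfinU : (⋃ i, E i).Finite := Set.finite_iUnion fun i => (hEsub i).finite
  refine ⟨main1, Set.Finite.subset hfinU hsub, ?_, ?_⟩
  · have hinf := PadicRootsAux.primeToRoots_infinite (p := p)
    obtain ⟨ε, hεS, hεE⟩ := (hinf.diff hfinU).nonempty
    have hge : ∀ i, 1 ≤ v (1 - lam i * (ε * ((p : AlgebraicClosure ℚ_[p]) ^ d)⁻¹)) := by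
      intro i
      by_contra hlt
      exact hεE (Set.mem_iUnion.mpr ⟨i, ⟨hεS, not_le.mp hlt⟩⟩)
    obtain ⟨hne, heq⟩ := hgood ε (hPR hεS) hge
    exact ⟨ε, hPR hεS, hne, heq.symm⟩
  · rintro r ⟨ε, hε, hne, rfl⟩
    exact main1 ε hε hne
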